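/- Let δ₁, δ₂ ∈ [0,1], α_ℓ ≤ α_u with α_ℓ > 0, β_ℓ ≤ β_u, and c > 0. Define ψ*(δ₁,δ₂) = c·(δ₂β_u + (1-δ₂)β_ℓ)/(δ₁α_u + (1-δ₁)α_ℓ) and let ψ_ℓ, ψ_u be the bounds ψ_ℓ = c·β_ℓ/((α_u-α_ℓ)𝟙(β_ℓ>0)+α_ℓ) and ψ_u = c·β_u/((α_ℓ-α_u)𝟙(β_u>0)+α_u). Then ψ_ℓ ≤ ψ*(δ₁,δ₂) ≤ ψ_u for all (δ₁,δ₂) ∈ [0,1]². -/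
import Mathlib


/-- The sensitivity-analysis interpolation `ψ*(δ₁,δ₂)` always lies between the
Theorem 2 bounds `ψ_ℓ` and `ψ_u`. -/
theorem stmt_12 (d1 d2 αl αu βl βu c : ℝ)
    (hd1 : d1 ∈ Set.Icc (0:ℝ) 1) (hd2 : d2 ∈ Set.Icc (0:ℝ) 1)
    (hαl : 0 < αl) (hα : αl ≤ αu) (hβ : βl ≤ βu) (hc : 0 < c) :
    c * βl / ((αu - αl) * (if 0 < βl then (1:ℝ) else 0) + αl) ≤
      c * (d2 * βu + (1 - d2) * βl) / (d1 * αu + (1 - d1) * αl) ∧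
    c * (d2 * βu + (1 - d2) * βl) / (d1 * αu + (1 - d1) * αl) ≤
      c * βu / ((αl - αu) * (if 0 < βu then (1:ℝ) else 0) + αu) := by
  obtain ⟨h10, h11⟩ := hd1
  obtain ⟨h20, h21⟩ := hd2
  set D := d1 * αu + (1 - d1) * αl with hD
  set N := d2 * βu + (1 - d2) * βl with hN
  have hDl : αl ≤ D := by nlinarith
  have hDu : D ≤ αu := by nlinarith
  have hDpos : 0 < D := lt_of_lt_of_le hαl hDl
  have hNl : βl ≤ N := by nlinarith
  have hNu : N ≤ βu := by nlinarith
  have hαu : 0 < αu := lt_of_lt_of_le hαl hα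
  constructor
  · by_cases hb : 0 < βl
    · simp only [if_pos hb, mul_one]
      rw [div_le_div_iff₀ (by linarith) hDpos]
      nlinarith [mul_le_mul_of_nonneg_left hDu (le_of_lt (mul_pos hc hb)),
        mul_le_mul_of_nonneg_left hNl (le_of_lt (mul_pos hc hDpos))]
    · push_neg at hb
      simp only [if_neg (not_lt.mpr hb), mul_zero, zero_add]
      rw [div_le_div_iff₀ hαl hDpos]
      nlinarith [mul_le_mul_of_nonpos_left hDl (mul_nonpos_of_nonneg_of_nonpos hc.le hb),
        mul_le_mul_of_nonneg_left hNl (le_of_lt (mul_pos hc hαl))]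
  · by_cases hb : 0 < βu
    · simp only [if_pos hb, mul_one]
      rw [div_le_div_iff₀ hDpos (by linarith)]
      nlinarith [mul_le_mul_of_nonneg_left hDl (le_of_lt (mul_pos hc hb)),
        mul_le_mul_of_nonneg_left hNu (le_of_lt (mul_pos hc hDpos))]
    · push_neg at hb
      simp only [if_neg (not_lt.mpr hb), mul_zero, zero_add]
      rw [div_le_div_iff₀ hDpos hαu]
      nlinarith [mul_le_mul_of_nonpos_left hDu (mul_nonpos_of_nonneg_of_nonpos hc.le hb),
        mul_le_mul_of_nonneg_left hNu (le_of_lt (mul_pos hc hαu))]
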